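/- The average teleportation fidelity over the Haar measure can be decomposed as F_tel = (1/3) F̄_dummy + (2/3) F̄_trap, where F̄_dummy is the average fidelity of the teleportation channel on the states |0⟩ and |1⟩, and F̄_trap is the average fidelity over the eight states |+_{iπ/4}⟩ for i = 0,...,7. -/

import Mathlib

open MeasureTheory Matrix Complex

noncomputable section

/-- Outer product `|v⟩⟨w|`. -/
def outer (v w : Fin 2 → ℂ) : Matrix (Fin 2) (Fin 2) ℂ :=
  fun i j => v i * (starRingEnd ℂ) (w j)

def ket0 : Fin 2 → ℂ := ![1, 0]
def ket1 : Fin 2 → ℂ := ![0, 1]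

/-- `|+_θ⟩ = (|0⟩ + e^{iθ}|1⟩)/√2`. -/
def ketPlus (θ : ℝ) : Fin 2 → ℂ :=
  ![(Real.sqrt 2 : ℂ)⁻¹, Complex.exp (θ * Complex.I) * (Real.sqrt 2 : ℂ)⁻¹]

/-- Fidelity of a single-qubit channel `Λ` on the pure state `ψ`. -/
def fid (Λ : Matrix (Fin 2) (Fin 2) ℂ →ₗ[ℂ] Matrix (Fin 2) (Fin 2) ℂ)
    (ψ : Fin 2 → ℂ) : ℝ :=
  (star ψ ⬝ᵥ (Λ (outer ψ ψ)).mulVec ψ).re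


def bv : Fin 2 → (Fin 2 → ℂ) := ![ket0, ket1]
def Lc (Λ : Matrix (Fin 2) (Fin 2) ℂ →ₗ[ℂ] Matrix (Fin 2) (Fin 2) ℂ)
    (a b c d : Fin 2) : ℂ := (Λ (outer (bv a) (bv b))) c d
def mono (a b c d : Fin 2) (ψ : Fin 2 → ℂ) : ℂ :=
  ψ a * (starRingEnd ℂ) (ψ b) * (starRingEnd ℂ) (ψ c) * ψ d

lemma outer_expand (ψ : Fin 2 → ℂ) : outer ψ ψ =
    (ψ 0 * (starRingEnd ℂ) (ψ 0)) • outer (bv 0) (bv 0) +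
    (ψ 0 * (starRingEnd ℂ) (ψ 1)) • outer (bv 0) (bv 1) +
    (ψ 1 * (starRingEnd ℂ) (ψ 0)) • outer (bv 1) (bv 0) +
    (ψ 1 * (starRingEnd ℂ) (ψ 1)) • outer (bv 1) (bv 1) := by
  ext i j
  fin_cases i <;> fin_cases j <;> simp [outer, bv, ket0, ket1]

lemma fid_eq (Λ : Matrix (Fin 2) (Fin 2) ℂ →ₗ[ℂ] Matrix (Fin 2) (Fin 2) ℂ)
    (ψ : Fin 2 → ℂ) : fid Λ ψ =
    (∑ p : Fin 2 × Fin 2 × Fin 2 × Fin 2,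
      Lc Λ p.1 p.2.1 p.2.2.1 p.2.2.2 * mono p.1 p.2.1 p.2.2.1 p.2.2.2 ψ).re := by
  unfold fid
  rw [outer_expand, map_add, map_add, map_add, LinearMap.map_smul, LinearMap.map_smul,
    LinearMap.map_smul, LinearMap.map_smul]
  congr 1
  simp [dotProduct, Matrix.mulVec, Fin.sum_univ_two, Lc, mono, Fintype.sum_prod_type]
  ring

lemma mono_cont (a b c d : Fin 2) : Continuous (mono a b c d) := by
  exact (((continuous_apply a).mul (Complex.continuous_conj.comp (continuous_apply b))).mul
    (Complex.continuous_conj.comp (continuous_apply c))).mul (continuous_apply d)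

lemma mono_integrable (μ : Measure (Fin 2 → ℂ)) [IsProbabilityMeasure μ]
    (hsupp : ∀ᵐ ψ ∂μ, ‖ψ 0‖ ^ 2 + ‖ψ 1‖ ^ 2 = 1)
    (a b c d : Fin 2) : Integrable (mono a b c d) μ := by
  refine Integrable.mono' (integrable_const 1) ((mono_cont a b c d).aestronglyMeasurable) ?_
  filter_upwards [hsupp] with ψ h
  have hb : ∀ i : Fin 2, ‖ψ i‖ ≤ 1 := by
    intro i
    have h0 : 0 ≤ ‖ψ 0‖ := norm_nonneg _
    have h1 : 0 ≤ ‖ψ 1‖ := norm_nonneg _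
    fin_cases i
    · show ‖ψ 0‖ ≤ 1; nlinarith
    · show ‖ψ 1‖ ≤ 1; nlinarith
  have : ‖mono a b c d ψ‖ =
      ‖ψ a‖ * ‖ψ b‖ * ‖ψ c‖ * ‖ψ d‖ := by
    simp [mono]
  rw [this]
  have hn : ∀ i : Fin 2, 0 ≤ ‖ψ i‖ := fun i => norm_nonneg _
  calc ‖ψ a‖ * ‖ψ b‖ * ‖ψ c‖ * ‖ψ d‖
      ≤ 1 * 1 * 1 * 1 := by
        gcongr <;> first | exact hn _ | exact hb _
    _ = 1 := by norm_num

lemma int_inv (μ : Measure (Fin 2 → ℂ))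
    (hinv : ∀ V : Matrix (Fin 2) (Fin 2) ℂ, V ∈ Matrix.unitaryGroup (Fin 2) ℂ →
      μ.map (fun ψ => V.mulVec ψ) = μ)
    (V : Matrix (Fin 2) (Fin 2) ℂ) (hV : V ∈ Matrix.unitaryGroup (Fin 2) ℂ)
    (f : (Fin 2 → ℂ) → ℂ) (hf : AEStronglyMeasurable f μ) :
    ∫ ψ, f (V.mulVec ψ) ∂μ = ∫ ψ, f ψ ∂μ := by
  have hm : Measurable (fun ψ : Fin 2 → ℂ => V.mulVec ψ) := by
    apply measurable_pi_lambda
    intro i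
    simp only [Matrix.mulVec, dotProduct]
    exact Finset.measurable_sum _ (fun j _ => (measurable_pi_apply j).const_mul _)
  conv_rhs => rw [← hinv V hV]
  rw [integral_map hm.aemeasurable (by rwa [hinv V hV])]

def V1 : Matrix (Fin 2) (Fin 2) ℂ := !![1, 0; 0, Complex.I]
def VX : Matrix (Fin 2) (Fin 2) ℂ := !![0, 1; 1, 0]
def VH : Matrix (Fin 2) (Fin 2) ℂ :=
  !![(Real.sqrt 2 : ℂ)⁻¹, (Real.sqrt 2 : ℂ)⁻¹; (Real.sqrt 2 : ℂ)⁻¹, -(Real.sqrt 2 : ℂ)⁻¹]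

lemma hs2 : (Real.sqrt 2 : ℂ)⁻¹ * (Real.sqrt 2 : ℂ)⁻¹ = 2⁻¹ := by
  rw [← mul_inv]
  norm_cast
  rw [Real.mul_self_sqrt (by norm_num)]
  norm_num

lemma conj_s : (starRingEnd ℂ) (Real.sqrt 2 : ℂ)⁻¹ = (Real.sqrt 2 : ℂ)⁻¹ := by
  rw [map_inv₀, Complex.conj_ofReal]

lemma V1_mem : V1 ∈ Matrix.unitaryGroup (Fin 2) ℂ := by
  rw [Matrix.mem_unitaryGroup_iff]
  ext i j
  fin_cases i <;> fin_cases j <;>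
    simp [V1, Matrix.mul_apply, Fin.sum_univ_two, Matrix.one_apply, Matrix.star_apply,
      Matrix.conjTranspose_apply]

lemma VX_mem : VX ∈ Matrix.unitaryGroup (Fin 2) ℂ := by
  rw [Matrix.mem_unitaryGroup_iff]
  ext i j
  fin_cases i <;> fin_cases j <;>
    simp [VX, Matrix.mul_apply, Fin.sum_univ_two, Matrix.one_apply, Matrix.star_apply,
      Matrix.conjTranspose_apply]

lemma VH_mem : VH ∈ Matrix.unitaryGroup (Fin 2) ℂ := by
  rw [Matrix.mem_unitaryGroup_iff]
  ext i j
  fin_cases i <;> fin_cases j <;>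
    simp [VH, Matrix.mul_apply, Fin.sum_univ_two, Matrix.one_apply, Matrix.star_apply,
      Matrix.conjTranspose_apply, conj_s] <;>
    rw [hs2] <;> norm_num

lemma V1_mv (ψ : Fin 2 → ℂ) : V1.mulVec ψ = ![ψ 0, Complex.I * ψ 1] := by
  funext i
  fin_cases i <;> simp [V1, Matrix.mulVec, dotProduct, Fin.sum_univ_two]

lemma VX_mv (ψ : Fin 2 → ℂ) : VX.mulVec ψ = ![ψ 1, ψ 0] := by
  funext i
  fin_cases i <;> simp [VX, Matrix.mulVec, dotProduct, Fin.sum_univ_two]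

lemma VH_mv (ψ : Fin 2 → ℂ) : VH.mulVec ψ =
    ![(Real.sqrt 2 : ℂ)⁻¹ * ψ 0 + (Real.sqrt 2 : ℂ)⁻¹ * ψ 1,
      (Real.sqrt 2 : ℂ)⁻¹ * ψ 0 - (Real.sqrt 2 : ℂ)⁻¹ * ψ 1] := by
  funext i
  fin_cases i <;> simp [VH, Matrix.mulVec, dotProduct, Fin.sum_univ_two] <;> ring

lemma int_eig (μ : Measure (Fin 2 → ℂ))
    (hinv : ∀ V : Matrix (Fin 2) (Fin 2) ℂ, V ∈ Matrix.unitaryGroup (Fin 2) ℂ →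
      μ.map (fun ψ => V.mulVec ψ) = μ)
    (V : Matrix (Fin 2) (Fin 2) ℂ) (hV : V ∈ Matrix.unitaryGroup (Fin 2) ℂ)
    (a b c d : Fin 2) (c0 : ℂ) (hc : c0 ≠ 1)
    (hpt : ∀ ψ, mono a b c d (V.mulVec ψ) = c0 * mono a b c d ψ) :
    ∫ ψ, mono a b c d ψ ∂μ = 0 := by
  have h := int_inv μ hinv V hV (mono a b c d) (mono_cont a b c d).aestronglyMeasurable
  simp only [hpt] at h
  rw [integral_const_mul] at h
  have h2 : (c0 - 1) * ∫ ψ, mono a b c d ψ ∂μ = 0 := by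
    rw [sub_mul, one_mul, h, sub_self]
  rcases mul_eq_zero.mp h2 with h3 | h3
  · exact absurd (sub_eq_zero.mp h3) hc
  · exact h3

lemma I_cube : Complex.I ^ 3 = -Complex.I := by
  rw [pow_succ, Complex.I_sq]; ring

section moments
variable (μ : Measure (Fin 2 → ℂ)) [IsProbabilityMeasure μ]

lemma zm0010 (hinv : ∀ V : Matrix (Fin 2) (Fin 2) ℂ, V ∈ Matrix.unitaryGroup (Fin 2) ℂ →
      μ.map (fun ψ => V.mulVec ψ) = μ) : ∫ ψ, mono 0 0 1 0 ψ ∂μ = 0 := by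
  refine int_eig μ hinv V1 V1_mem 0 0 1 0 (-Complex.I) (by simp [Complex.ext_iff] <;> norm_num) (fun ψ => ?_)
  rw [V1_mv]; unfold mono; simp [Complex.conj_I]
  try ring_nf
  try simp only [I_cube, Complex.I_sq]
  try ring

lemma zm0100 (hinv : ∀ V : Matrix (Fin 2) (Fin 2) ℂ, V ∈ Matrix.unitaryGroup (Fin 2) ℂ →
      μ.map (fun ψ => V.mulVec ψ) = μ) : ∫ ψ, mono 0 1 0 0 ψ ∂μ = 0 := by
  refine int_eig μ hinv V1 V1_mem 0 1 0 0 (-Complex.I) (by simp [Complex.ext_iff] <;> norm_num) (fun ψ => ?_)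
  rw [V1_mv]; unfold mono; simp [Complex.conj_I]
  try ring_nf
  try simp only [I_cube, Complex.I_sq]
  try ring

lemma zm0001 (hinv : ∀ V : Matrix (Fin 2) (Fin 2) ℂ, V ∈ Matrix.unitaryGroup (Fin 2) ℂ →
      μ.map (fun ψ => V.mulVec ψ) = μ) : ∫ ψ, mono 0 0 0 1 ψ ∂μ = 0 := by
  refine int_eig μ hinv V1 V1_mem 0 0 0 1 (Complex.I) (by simp [Complex.ext_iff] <;> norm_num) (fun ψ => ?_)
  rw [V1_mv]; unfold mono; simp [Complex.conj_I]
  try ring_nf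
  try simp only [I_cube, Complex.I_sq]
  try ring

lemma zm1000 (hinv : ∀ V : Matrix (Fin 2) (Fin 2) ℂ, V ∈ Matrix.unitaryGroup (Fin 2) ℂ →
      μ.map (fun ψ => V.mulVec ψ) = μ) : ∫ ψ, mono 1 0 0 0 ψ ∂μ = 0 := by
  refine int_eig μ hinv V1 V1_mem 1 0 0 0 (Complex.I) (by simp [Complex.ext_iff] <;> norm_num) (fun ψ => ?_)
  rw [V1_mv]; unfold mono; simp [Complex.conj_I]
  try ring_nf
  try simp only [I_cube, Complex.I_sq]
  try ring

lemma zm0111 (hinv : ∀ V : Matrix (Fin 2) (Fin 2) ℂ, V ∈ Matrix.unitaryGroup (Fin 2) ℂ →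
      μ.map (fun ψ => V.mulVec ψ) = μ) : ∫ ψ, mono 0 1 1 1 ψ ∂μ = 0 := by
  refine int_eig μ hinv V1 V1_mem 0 1 1 1 (-Complex.I) (by simp [Complex.ext_iff] <;> norm_num) (fun ψ => ?_)
  rw [V1_mv]; unfold mono; simp [Complex.conj_I]
  try ring_nf
  try simp only [I_cube, Complex.I_sq]
  try ring

lemma zm1110 (hinv : ∀ V : Matrix (Fin 2) (Fin 2) ℂ, V ∈ Matrix.unitaryGroup (Fin 2) ℂ →
      μ.map (fun ψ => V.mulVec ψ) = μ) : ∫ ψ, mono 1 1 1 0 ψ ∂μ = 0 := by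
  refine int_eig μ hinv V1 V1_mem 1 1 1 0 (-Complex.I) (by simp [Complex.ext_iff] <;> norm_num) (fun ψ => ?_)
  rw [V1_mv]; unfold mono; simp [Complex.conj_I]
  try ring_nf
  try simp only [I_cube, Complex.I_sq]
  try ring

lemma zm1011 (hinv : ∀ V : Matrix (Fin 2) (Fin 2) ℂ, V ∈ Matrix.unitaryGroup (Fin 2) ℂ →
      μ.map (fun ψ => V.mulVec ψ) = μ) : ∫ ψ, mono 1 0 1 1 ψ ∂μ = 0 := by
  refine int_eig μ hinv V1 V1_mem 1 0 1 1 (Complex.I) (by simp [Complex.ext_iff] <;> norm_num) (fun ψ => ?_)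
  rw [V1_mv]; unfold mono; simp [Complex.conj_I]
  try ring_nf
  try simp only [I_cube, Complex.I_sq]
  try ring

lemma zm1101 (hinv : ∀ V : Matrix (Fin 2) (Fin 2) ℂ, V ∈ Matrix.unitaryGroup (Fin 2) ℂ →
      μ.map (fun ψ => V.mulVec ψ) = μ) : ∫ ψ, mono 1 1 0 1 ψ ∂μ = 0 := by
  refine int_eig μ hinv V1 V1_mem 1 1 0 1 (Complex.I) (by simp [Complex.ext_iff] <;> norm_num) (fun ψ => ?_)
  rw [V1_mv]; unfold mono; simp [Complex.conj_I]
  try ring_nf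
  try simp only [I_cube, Complex.I_sq]
  try ring

lemma zm0110 (hinv : ∀ V : Matrix (Fin 2) (Fin 2) ℂ, V ∈ Matrix.unitaryGroup (Fin 2) ℂ →
      μ.map (fun ψ => V.mulVec ψ) = μ) : ∫ ψ, mono 0 1 1 0 ψ ∂μ = 0 := by
  refine int_eig μ hinv V1 V1_mem 0 1 1 0 ((-1 : ℂ)) (by simp [Complex.ext_iff] <;> norm_num) (fun ψ => ?_)
  rw [V1_mv]; unfold mono; simp [Complex.conj_I]
  try ring_nf
  try simp only [I_cube, Complex.I_sq]
  try ring

lemma zm1001 (hinv : ∀ V : Matrix (Fin 2) (Fin 2) ℂ, V ∈ Matrix.unitaryGroup (Fin 2) ℂ →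
      μ.map (fun ψ => V.mulVec ψ) = μ) : ∫ ψ, mono 1 0 0 1 ψ ∂μ = 0 := by
  refine int_eig μ hinv V1 V1_mem 1 0 0 1 ((-1 : ℂ)) (by simp [Complex.ext_iff] <;> norm_num) (fun ψ => ?_)
  rw [V1_mv]; unfold mono; simp [Complex.conj_I]
  try ring_nf
  try simp only [I_cube, Complex.I_sq]
  try ring

end moments

section momvals
variable (μ : Measure (Fin 2 → ℂ)) [IsProbabilityMeasure μ]

lemma mono_swap
    (hinv : ∀ V : Matrix (Fin 2) (Fin 2) ℂ, V ∈ Matrix.unitaryGroup (Fin 2) ℂ →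
      μ.map (fun ψ => V.mulVec ψ) = μ) :
    ∫ ψ, mono 1 1 1 1 ψ ∂μ = ∫ ψ, mono 0 0 0 0 ψ ∂μ := by
  have h := int_inv μ hinv VX VX_mem (mono 0 0 0 0) (mono_cont 0 0 0 0).aestronglyMeasurable
  have hpt : ∀ ψ : Fin 2 → ℂ, mono 0 0 0 0 (VX.mulVec ψ) = mono 1 1 1 1 ψ := fun ψ => by
    rw [VX_mv]; unfold mono; simp
  simp only [hpt] at h
  exact h

lemma monoB1 : mono 0 1 0 1 = mono 0 0 1 1 := funext fun ψ => by unfold mono; ring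
lemma monoB2 : mono 1 0 1 0 = mono 0 0 1 1 := funext fun ψ => by unfold mono; ring
lemma monoB3 : mono 1 1 0 0 = mono 0 0 1 1 := funext fun ψ => by unfold mono; ring

lemma norm_int
    (hsupp : ∀ᵐ ψ ∂μ, ‖ψ 0‖ ^ 2 + ‖ψ 1‖ ^ 2 = 1) :
    (∫ ψ, mono 0 0 0 0 ψ ∂μ) + 2 * (∫ ψ, mono 0 0 1 1 ψ ∂μ)
      + (∫ ψ, mono 1 1 1 1 ψ ∂μ) = 1 := by
  have hint : ∫ ψ, (mono 0 0 0 0 ψ + mono 0 0 1 1 ψ + mono 1 1 0 0 ψ + mono 1 1 1 1 ψ) ∂μ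
      = (1 : ℂ) := by
    rw [integral_congr_ae (g := fun _ => (1:ℂ))]
    · simp
    · filter_upwards [hsupp] with ψ h
      have e0 : ψ 0 * (starRingEnd ℂ) (ψ 0) = ((‖ψ 0‖ ^ 2 : ℝ) : ℂ) := by
        rw [Complex.mul_conj, Complex.normSq_eq_norm_sq]
      have e1 : ψ 1 * (starRingEnd ℂ) (ψ 1) = ((‖ψ 1‖ ^ 2 : ℝ) : ℂ) := by
        rw [Complex.mul_conj, Complex.normSq_eq_norm_sq]
      unfold mono
      calc ψ 0 * (starRingEnd ℂ) (ψ 0) * (starRingEnd ℂ) (ψ 0) * ψ 0 +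
            ψ 0 * (starRingEnd ℂ) (ψ 0) * (starRingEnd ℂ) (ψ 1) * ψ 1 +
            ψ 1 * (starRingEnd ℂ) (ψ 1) * (starRingEnd ℂ) (ψ 0) * ψ 0 +
            ψ 1 * (starRingEnd ℂ) (ψ 1) * (starRingEnd ℂ) (ψ 1) * ψ 1
          = (ψ 0 * (starRingEnd ℂ) (ψ 0) + ψ 1 * (starRingEnd ℂ) (ψ 1)) ^ 2 := by ring
        _ = (((‖ψ 0‖ ^ 2 + ‖ψ 1‖ ^ 2 : ℝ)) : ℂ) ^ 2 := by
            rw [e0, e1]; push_cast; ring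
        _ = 1 := by rw [h]; norm_num
  rw [integral_add, integral_add, integral_add] at hint
  · rw [monoB3] at hint
    linear_combination hint
  all_goals first
    | exact mono_integrable μ hsupp _ _ _ _
    | exact (mono_integrable μ hsupp _ _ _ _).add (mono_integrable μ hsupp _ _ _ _)
    | exact ((mono_integrable μ hsupp _ _ _ _).add (mono_integrable μ hsupp _ _ _ _)).add
        (mono_integrable μ hsupp _ _ _ _)

lemma had_rel
    (hsupp : ∀ᵐ ψ ∂μ, ‖ψ 0‖ ^ 2 + ‖ψ 1‖ ^ 2 = 1)
    (hinv : ∀ V : Matrix (Fin 2) (Fin 2) ℂ, V ∈ Matrix.unitaryGroup (Fin 2) ℂ →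
      μ.map (fun ψ => V.mulVec ψ) = μ) :
    ∫ ψ, mono 0 0 0 0 ψ ∂μ = 4⁻¹ * ∑ p : Fin 2 × Fin 2 × Fin 2 × Fin 2,
      ∫ ψ, mono p.1 p.2.1 p.2.2.1 p.2.2.2 ψ ∂μ := by
  have h := int_inv μ hinv VH VH_mem (mono 0 0 0 0) (mono_cont 0 0 0 0).aestronglyMeasurable
  have hpt : ∀ ψ : Fin 2 → ℂ, mono 0 0 0 0 (VH.mulVec ψ) =
      4⁻¹ * ∑ p : Fin 2 × Fin 2 × Fin 2 × Fin 2, mono p.1 p.2.1 p.2.2.1 p.2.2.2 ψ := by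
    intro ψ
    rw [VH_mv]; unfold mono
    simp only [Matrix.cons_val_zero, Matrix.cons_val_one, Matrix.head_cons, map_add,
      _root_.map_mul, conj_s, Fintype.sum_prod_type, Fin.sum_univ_two]
    linear_combination (((Real.sqrt 2 : ℂ)⁻¹ * (Real.sqrt 2 : ℂ)⁻¹ + 2⁻¹) *
      ((ψ 0 + ψ 1) * ((starRingEnd ℂ) (ψ 0) + (starRingEnd ℂ) (ψ 1))) ^ 2) * hs2
  rw [← h]
  simp only [hpt]
  rw [integral_const_mul]
  congr 1
  rw [integral_finset_sum _ (fun p _ => mono_integrable μ hsupp _ _ _ _)]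

lemma mom_A
    (hsupp : ∀ᵐ ψ ∂μ, ‖ψ 0‖ ^ 2 + ‖ψ 1‖ ^ 2 = 1)
    (hinv : ∀ V : Matrix (Fin 2) (Fin 2) ℂ, V ∈ Matrix.unitaryGroup (Fin 2) ℂ →
      μ.map (fun ψ => V.mulVec ψ) = μ) :
    ∫ ψ, mono 0 0 0 0 ψ ∂μ = 3⁻¹ := by
  have hE := had_rel μ hsupp hinv
  simp only [Fintype.sum_prod_type, Fin.sum_univ_two] at hE
  rw [monoB1, monoB2, monoB3] at hE
  rw [zm0010 μ hinv, zm0100 μ hinv, zm0001 μ hinv, zm1000 μ hinv, zm0111 μ hinv,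
    zm1110 μ hinv, zm1011 μ hinv, zm1101 μ hinv, zm0110 μ hinv, zm1001 μ hinv,
    mono_swap μ hinv] at hE
  have hN := norm_int μ hsupp
  rw [mono_swap μ hinv] at hN
  linear_combination (2/3 : ℂ) * hE + (1/3 : ℂ) * hN

lemma mom_B
    (hsupp : ∀ᵐ ψ ∂μ, ‖ψ 0‖ ^ 2 + ‖ψ 1‖ ^ 2 = 1)
    (hinv : ∀ V : Matrix (Fin 2) (Fin 2) ℂ, V ∈ Matrix.unitaryGroup (Fin 2) ℂ →
      μ.map (fun ψ => V.mulVec ψ) = μ) :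
    ∫ ψ, mono 0 0 1 1 ψ ∂μ = 6⁻¹ := by
  have hE := had_rel μ hsupp hinv
  simp only [Fintype.sum_prod_type, Fin.sum_univ_two] at hE
  rw [monoB1, monoB2, monoB3] at hE
  rw [zm0010 μ hinv, zm0100 μ hinv, zm0001 μ hinv, zm1000 μ hinv, zm0111 μ hinv,
    zm1110 μ hinv, zm1011 μ hinv, zm1101 μ hinv, zm0110 μ hinv, zm1001 μ hinv,
    mono_swap μ hinv] at hE
  have hN := norm_int μ hsupp
  rw [mono_swap μ hinv] at hN
  linear_combination (-2/3 : ℂ) * hE + (1/6 : ℂ) * hN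

end momvals

lemma int_fid (μ : Measure (Fin 2 → ℂ)) [IsProbabilityMeasure μ]
    (hsupp : ∀ᵐ ψ ∂μ, ‖ψ 0‖ ^ 2 + ‖ψ 1‖ ^ 2 = 1)
    (hinv : ∀ V : Matrix (Fin 2) (Fin 2) ℂ, V ∈ Matrix.unitaryGroup (Fin 2) ℂ →
      μ.map (fun ψ => V.mulVec ψ) = μ)
    (Λ : Matrix (Fin 2) (Fin 2) ℂ →ₗ[ℂ] Matrix (Fin 2) (Fin 2) ℂ) :
    ∫ ψ, fid Λ ψ ∂μ = (3⁻¹ * Lc Λ 0 0 0 0 + 3⁻¹ * Lc Λ 1 1 1 1 +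
      6⁻¹ * (Lc Λ 0 0 1 1 + Lc Λ 0 1 0 1 + Lc Λ 1 0 1 0 + Lc Λ 1 1 0 0)).re := by
  have hfi : Integrable (fun ψ => ∑ p : Fin 2 × Fin 2 × Fin 2 × Fin 2,
      Lc Λ p.1 p.2.1 p.2.2.1 p.2.2.2 * mono p.1 p.2.1 p.2.2.1 p.2.2.2 ψ) μ :=
    integrable_finset_sum _ (fun p _ => (mono_integrable μ hsupp _ _ _ _).const_mul _)
  have h1 : ∫ ψ, fid Λ ψ ∂μ = (∫ ψ, ∑ p : Fin 2 × Fin 2 × Fin 2 × Fin 2,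
      Lc Λ p.1 p.2.1 p.2.2.1 p.2.2.2 * mono p.1 p.2.1 p.2.2.1 p.2.2.2 ψ ∂μ).re := by
    have h2 := integral_re hfi
    simp only [RCLike.re_to_complex] at h2
    rw [← h2]
    simp only [fid_eq]
  rw [h1, integral_finset_sum _ (fun p _ => (mono_integrable μ hsupp _ _ _ _).const_mul _)]
  simp only [integral_const_mul]
  congr 1
  simp only [Fintype.sum_prod_type, Fin.sum_univ_two]
  rw [monoB1, monoB2, monoB3]
  rw [zm0010 μ hinv, zm0100 μ hinv, zm0001 μ hinv, zm1000 μ hinv, zm0111 μ hinv,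
    zm1110 μ hinv, zm1011 μ hinv, zm1101 μ hinv, zm0110 μ hinv, zm1001 μ hinv,
    mono_swap μ hinv, mom_A μ hsupp hinv, mom_B μ hsupp hinv]
  ring

def T0c (Λ : Matrix (Fin 2) (Fin 2) ℂ →ₗ[ℂ] Matrix (Fin 2) (Fin 2) ℂ) : ℂ :=
  Lc Λ 0 0 0 0 + Lc Λ 1 1 1 1 + (Lc Λ 0 0 1 1 + Lc Λ 0 1 0 1 + Lc Λ 1 0 1 0 + Lc Λ 1 1 0 0)
def Qc (Λ : Matrix (Fin 2) (Fin 2) ℂ →ₗ[ℂ] Matrix (Fin 2) (Fin 2) ℂ) : ℂ :=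
  Lc Λ 0 0 0 1 + Lc Λ 1 0 0 0 + Lc Λ 1 0 1 1 + Lc Λ 1 1 0 1
def Pc (Λ : Matrix (Fin 2) (Fin 2) ℂ →ₗ[ℂ] Matrix (Fin 2) (Fin 2) ℂ) : ℂ :=
  Lc Λ 0 0 1 0 + Lc Λ 0 1 0 0 + Lc Λ 0 1 1 1 + Lc Λ 1 1 1 0
def Sc (Λ : Matrix (Fin 2) (Fin 2) ℂ →ₗ[ℂ] Matrix (Fin 2) (Fin 2) ℂ) : ℂ := Lc Λ 1 0 0 1
def Rc (Λ : Matrix (Fin 2) (Fin 2) ℂ →ₗ[ℂ] Matrix (Fin 2) (Fin 2) ℂ) : ℂ := Lc Λ 0 1 1 0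

lemma fid_ket0 (Λ : Matrix (Fin 2) (Fin 2) ℂ →ₗ[ℂ] Matrix (Fin 2) (Fin 2) ℂ) :
    fid Λ ket0 = (Lc Λ 0 0 0 0).re := by
  rw [fid_eq]
  congr 1
  simp [Fintype.sum_prod_type, Fin.sum_univ_two, mono, ket0]

lemma fid_ket1 (Λ : Matrix (Fin 2) (Fin 2) ℂ →ₗ[ℂ] Matrix (Fin 2) (Fin 2) ℂ) :
    fid Λ ket1 = (Lc Λ 1 1 1 1).re := by
  rw [fid_eq]
  congr 1
  simp [Fintype.sum_prod_type, Fin.sum_univ_two, mono, ket1]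

def uv (θ : ℝ) : Fin 2 → ℂ := ![1, Complex.exp (θ * Complex.I)]

lemma ketPlus_eq (θ : ℝ) : ketPlus θ = (Real.sqrt 2 : ℂ)⁻¹ • uv θ := by
  funext i
  fin_cases i <;> simp [ketPlus, uv] <;> ring

lemma outer_smul (c : ℂ) (ψ : Fin 2 → ℂ) :
    outer (c • ψ) (c • ψ) = (c * (starRingEnd ℂ) c) • outer ψ ψ := by
  ext i j
  simp [outer]
  ring

lemma conj_exp_mI (θ : ℝ) :
    (starRingEnd ℂ) (Complex.exp (θ * Complex.I)) = Complex.exp (-(θ * Complex.I)) := by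
  rw [← Complex.exp_conj]
  congr 1
  simp [Complex.conj_ofReal]

lemma uv_expand (Λ : Matrix (Fin 2) (Fin 2) ℂ →ₗ[ℂ] Matrix (Fin 2) (Fin 2) ℂ) (θ : ℝ) :
    star (uv θ) ⬝ᵥ (Λ (outer (uv θ) (uv θ))).mulVec (uv θ) =
      T0c Λ + Complex.exp (θ * Complex.I) * Qc Λ + Complex.exp (-(θ * Complex.I)) * Pc Λ +
        Complex.exp ((2*θ : ℝ) * Complex.I) * Sc Λ +
        Complex.exp (-((2*θ : ℝ) * Complex.I)) * Rc Λ := by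
  have hw : Complex.exp (θ * Complex.I) * Complex.exp (-(θ * Complex.I)) = 1 := by
    rw [← Complex.exp_add]; simp
  have hw2 : Complex.exp ((2*θ : ℝ) * Complex.I) =
      Complex.exp (θ * Complex.I) * Complex.exp (θ * Complex.I) := by
    rw [← Complex.exp_add]; congr 1; push_cast; ring
  have hw2n : Complex.exp (-((2*θ : ℝ) * Complex.I)) =
      Complex.exp (-(θ * Complex.I)) * Complex.exp (-(θ * Complex.I)) := by
    rw [← Complex.exp_add]; congr 1; push_cast; ring
  rw [outer_expand (uv θ), map_add, map_add, map_add, LinearMap.map_smul, LinearMap.map_smul,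
    LinearMap.map_smul, LinearMap.map_smul, hw2, hw2n]
  simp only [dotProduct, Matrix.mulVec, Fin.sum_univ_two, Pi.star_apply, Matrix.add_apply,
    Matrix.smul_apply, smul_eq_mul, uv, Matrix.cons_val_zero, Matrix.cons_val_one,
    Matrix.head_cons, _root_.map_one, _root_.map_mul, conj_exp_mI, T0c, Qc, Pc, Sc, Rc, Lc,
    RCLike.star_def]
  linear_combination ((Λ (outer (bv 0) (bv 0)) 1 1 + Λ (outer (bv 0) (bv 1)) 0 1 + Λ (outer (bv 1) (bv 0)) 1 0 + Λ (outer (bv 1) (bv 1)) 0 0) +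
    Complex.exp (θ * Complex.I) * (Λ (outer (bv 1) (bv 0)) 1 1 + Λ (outer (bv 1) (bv 1)) 0 1) +
    Complex.exp (-(θ * Complex.I)) * (Λ (outer (bv 0) (bv 1)) 1 1 + Λ (outer (bv 1) (bv 1)) 1 0) +
    (Complex.exp (θ * Complex.I) * Complex.exp (-(θ * Complex.I)) + 1) * Λ (outer (bv 1) (bv 1)) 1 1) * hw

lemma scale_quad (M : Matrix (Fin 2) (Fin 2) ℂ) (c d : ℂ) (u : Fin 2 → ℂ) :
    star (c • u) ⬝ᵥ (d • M).mulVec (c • u) =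
      ((starRingEnd ℂ) c * d * c) * (star u ⬝ᵥ M.mulVec u) := by
  simp [dotProduct, Matrix.mulVec, Fin.sum_univ_two, smul_eq_mul, RCLike.star_def]
  ring

lemma fid_ketPlus (Λ : Matrix (Fin 2) (Fin 2) ℂ →ₗ[ℂ] Matrix (Fin 2) (Fin 2) ℂ) (θ : ℝ) :
    fid Λ (ketPlus θ) = 4⁻¹ * (T0c Λ + Complex.exp (θ * Complex.I) * Qc Λ +
      Complex.exp (-(θ * Complex.I)) * Pc Λ +
      Complex.exp ((2*θ : ℝ) * Complex.I) * Sc Λ +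
      Complex.exp (-((2*θ : ℝ) * Complex.I)) * Rc Λ).re := by
  unfold fid
  rw [ketPlus_eq, outer_smul, LinearMap.map_smul, scale_quad, uv_expand, conj_s]
  rw [show ((Real.sqrt 2 : ℂ)⁻¹ * ((Real.sqrt 2 : ℂ)⁻¹ * (Real.sqrt 2 : ℂ)⁻¹) *
      (Real.sqrt 2 : ℂ)⁻¹) = (((4:ℝ)⁻¹ : ℝ) : ℂ) from by
    rw [show ((Real.sqrt 2 : ℂ)⁻¹ * ((Real.sqrt 2 : ℂ)⁻¹ * (Real.sqrt 2 : ℂ)⁻¹) *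
        (Real.sqrt 2 : ℂ)⁻¹) = ((Real.sqrt 2 : ℂ)⁻¹ * (Real.sqrt 2 : ℂ)⁻¹) *
        ((Real.sqrt 2 : ℂ)⁻¹ * (Real.sqrt 2 : ℂ)⁻¹) from by ring, hs2]
    norm_num]
  rw [Complex.re_ofReal_mul]

lemma cexp_val (x : ℝ) : Complex.exp (x * Complex.I) =
    ((Real.cos x : ℝ) : ℂ) + ((Real.sin x : ℝ) : ℂ) * Complex.I := by
  rw [Complex.exp_mul_I, ← Complex.ofReal_cos, ← Complex.ofReal_sin]

lemma cexp_neg_val (x : ℝ) : Complex.exp (-(x * Complex.I)) =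
    ((Real.cos x : ℝ) : ℂ) - ((Real.sin x : ℝ) : ℂ) * Complex.I := by
  rw [show -((x:ℂ) * Complex.I) = ((-x : ℝ) : ℂ) * Complex.I from by push_cast; ring,
    cexp_val, Real.cos_neg, Real.sin_neg]
  push_cast
  ring

lemma vc0 : Real.cos (0 * Real.pi / 4) = 1 := by
  rw [show (0 * Real.pi / 4 : ℝ) = 0 from by ring]
  simp [Real.cos_add, Real.sin_add, Real.cos_pi, Real.sin_pi, Real.cos_two_pi, Real.sin_two_pi, Real.cos_pi_div_two, Real.sin_pi_div_two, Real.cos_pi_div_four, Real.sin_pi_div_four]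
lemma vs0 : Real.sin (0 * Real.pi / 4) = 0 := by
  rw [show (0 * Real.pi / 4 : ℝ) = 0 from by ring]
  simp [Real.cos_add, Real.sin_add, Real.cos_pi, Real.sin_pi, Real.cos_two_pi, Real.sin_two_pi, Real.cos_pi_div_two, Real.sin_pi_div_two, Real.cos_pi_div_four, Real.sin_pi_div_four]
lemma wc0 : Real.cos (2 * (0 * Real.pi / 4)) = 1 := by
  rw [show (2 * (0 * Real.pi / 4) : ℝ) = 0 from by ring]
  simp [Real.cos_add, Real.sin_add, Real.cos_pi, Real.sin_pi, Real.cos_two_pi, Real.sin_two_pi, Real.cos_pi_div_two, Real.sin_pi_div_two, Real.cos_pi_div_four, Real.sin_pi_div_four]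
lemma ws0 : Real.sin (2 * (0 * Real.pi / 4)) = 0 := by
  rw [show (2 * (0 * Real.pi / 4) : ℝ) = 0 from by ring]
  simp [Real.cos_add, Real.sin_add, Real.cos_pi, Real.sin_pi, Real.cos_two_pi, Real.sin_two_pi, Real.cos_pi_div_two, Real.sin_pi_div_two, Real.cos_pi_div_four, Real.sin_pi_div_four]

lemma vc1 : Real.cos (1 * Real.pi / 4) = (Real.sqrt 2/2) := by
  rw [show (1 * Real.pi / 4 : ℝ) = Real.pi/4 from by ring]
  simp [Real.cos_add, Real.sin_add, Real.cos_pi, Real.sin_pi, Real.cos_two_pi, Real.sin_two_pi, Real.cos_pi_div_two, Real.sin_pi_div_two, Real.cos_pi_div_four, Real.sin_pi_div_four]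
lemma vs1 : Real.sin (1 * Real.pi / 4) = (Real.sqrt 2/2) := by
  rw [show (1 * Real.pi / 4 : ℝ) = Real.pi/4 from by ring]
  simp [Real.cos_add, Real.sin_add, Real.cos_pi, Real.sin_pi, Real.cos_two_pi, Real.sin_two_pi, Real.cos_pi_div_two, Real.sin_pi_div_two, Real.cos_pi_div_four, Real.sin_pi_div_four]
lemma wc1 : Real.cos (2 * (1 * Real.pi / 4)) = 0 := by
  rw [show (2 * (1 * Real.pi / 4) : ℝ) = Real.pi/2 from by ring]
  simp [Real.cos_add, Real.sin_add, Real.cos_pi, Real.sin_pi, Real.cos_two_pi, Real.sin_two_pi, Real.cos_pi_div_two, Real.sin_pi_div_two, Real.cos_pi_div_four, Real.sin_pi_div_four]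
lemma ws1 : Real.sin (2 * (1 * Real.pi / 4)) = 1 := by
  rw [show (2 * (1 * Real.pi / 4) : ℝ) = Real.pi/2 from by ring]
  simp [Real.cos_add, Real.sin_add, Real.cos_pi, Real.sin_pi, Real.cos_two_pi, Real.sin_two_pi, Real.cos_pi_div_two, Real.sin_pi_div_two, Real.cos_pi_div_four, Real.sin_pi_div_four]

lemma vc2 : Real.cos (2 * Real.pi / 4) = 0 := by
  rw [show (2 * Real.pi / 4 : ℝ) = Real.pi/2 from by ring]
  simp [Real.cos_add, Real.sin_add, Real.cos_pi, Real.sin_pi, Real.cos_two_pi, Real.sin_two_pi, Real.cos_pi_div_two, Real.sin_pi_div_two, Real.cos_pi_div_four, Real.sin_pi_div_four]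
lemma vs2 : Real.sin (2 * Real.pi / 4) = 1 := by
  rw [show (2 * Real.pi / 4 : ℝ) = Real.pi/2 from by ring]
  simp [Real.cos_add, Real.sin_add, Real.cos_pi, Real.sin_pi, Real.cos_two_pi, Real.sin_two_pi, Real.cos_pi_div_two, Real.sin_pi_div_two, Real.cos_pi_div_four, Real.sin_pi_div_four]
lemma wc2 : Real.cos (2 * (2 * Real.pi / 4)) = -1 := by
  rw [show (2 * (2 * Real.pi / 4) : ℝ) = Real.pi from by ring]
  simp [Real.cos_add, Real.sin_add, Real.cos_pi, Real.sin_pi, Real.cos_two_pi, Real.sin_two_pi, Real.cos_pi_div_two, Real.sin_pi_div_two, Real.cos_pi_div_four, Real.sin_pi_div_four]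
lemma ws2 : Real.sin (2 * (2 * Real.pi / 4)) = 0 := by
  rw [show (2 * (2 * Real.pi / 4) : ℝ) = Real.pi from by ring]
  simp [Real.cos_add, Real.sin_add, Real.cos_pi, Real.sin_pi, Real.cos_two_pi, Real.sin_two_pi, Real.cos_pi_div_two, Real.sin_pi_div_two, Real.cos_pi_div_four, Real.sin_pi_div_four]

lemma vc3 : Real.cos (3 * Real.pi / 4) = (-(Real.sqrt 2/2)) := by
  rw [show (3 * Real.pi / 4 : ℝ) = Real.pi/2 + Real.pi/4 from by ring]
  simp [Real.cos_add, Real.sin_add, Real.cos_pi, Real.sin_pi, Real.cos_two_pi, Real.sin_two_pi, Real.cos_pi_div_two, Real.sin_pi_div_two, Real.cos_pi_div_four, Real.sin_pi_div_four]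
lemma vs3 : Real.sin (3 * Real.pi / 4) = (Real.sqrt 2/2) := by
  rw [show (3 * Real.pi / 4 : ℝ) = Real.pi/2 + Real.pi/4 from by ring]
  simp [Real.cos_add, Real.sin_add, Real.cos_pi, Real.sin_pi, Real.cos_two_pi, Real.sin_two_pi, Real.cos_pi_div_two, Real.sin_pi_div_two, Real.cos_pi_div_four, Real.sin_pi_div_four]
lemma wc3 : Real.cos (2 * (3 * Real.pi / 4)) = 0 := by
  rw [show (2 * (3 * Real.pi / 4) : ℝ) = Real.pi + Real.pi/2 from by ring]
  simp [Real.cos_add, Real.sin_add, Real.cos_pi, Real.sin_pi, Real.cos_two_pi, Real.sin_two_pi, Real.cos_pi_div_two, Real.sin_pi_div_two, Real.cos_pi_div_four, Real.sin_pi_div_four]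
lemma ws3 : Real.sin (2 * (3 * Real.pi / 4)) = -1 := by
  rw [show (2 * (3 * Real.pi / 4) : ℝ) = Real.pi + Real.pi/2 from by ring]
  simp [Real.cos_add, Real.sin_add, Real.cos_pi, Real.sin_pi, Real.cos_two_pi, Real.sin_two_pi, Real.cos_pi_div_two, Real.sin_pi_div_two, Real.cos_pi_div_four, Real.sin_pi_div_four]

lemma vc4 : Real.cos (4 * Real.pi / 4) = -1 := by
  rw [show (4 * Real.pi / 4 : ℝ) = Real.pi from by ring]
  simp [Real.cos_add, Real.sin_add, Real.cos_pi, Real.sin_pi, Real.cos_two_pi, Real.sin_two_pi, Real.cos_pi_div_two, Real.sin_pi_div_two, Real.cos_pi_div_four, Real.sin_pi_div_four]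
lemma vs4 : Real.sin (4 * Real.pi / 4) = 0 := by
  rw [show (4 * Real.pi / 4 : ℝ) = Real.pi from by ring]
  simp [Real.cos_add, Real.sin_add, Real.cos_pi, Real.sin_pi, Real.cos_two_pi, Real.sin_two_pi, Real.cos_pi_div_two, Real.sin_pi_div_two, Real.cos_pi_div_four, Real.sin_pi_div_four]
lemma wc4 : Real.cos (2 * (4 * Real.pi / 4)) = 1 := by
  rw [show (2 * (4 * Real.pi / 4) : ℝ) = 2*Real.pi from by ring]
  simp [Real.cos_add, Real.sin_add, Real.cos_pi, Real.sin_pi, Real.cos_two_pi, Real.sin_two_pi, Real.cos_pi_div_two, Real.sin_pi_div_two, Real.cos_pi_div_four, Real.sin_pi_div_four]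
lemma ws4 : Real.sin (2 * (4 * Real.pi / 4)) = 0 := by
  rw [show (2 * (4 * Real.pi / 4) : ℝ) = 2*Real.pi from by ring]
  simp [Real.cos_add, Real.sin_add, Real.cos_pi, Real.sin_pi, Real.cos_two_pi, Real.sin_two_pi, Real.cos_pi_div_two, Real.sin_pi_div_two, Real.cos_pi_div_four, Real.sin_pi_div_four]

lemma vc5 : Real.cos (5 * Real.pi / 4) = (-(Real.sqrt 2/2)) := by
  rw [show (5 * Real.pi / 4 : ℝ) = Real.pi + Real.pi/4 from by ring]
  simp [Real.cos_add, Real.sin_add, Real.cos_pi, Real.sin_pi, Real.cos_two_pi, Real.sin_two_pi, Real.cos_pi_div_two, Real.sin_pi_div_two, Real.cos_pi_div_four, Real.sin_pi_div_four]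
lemma vs5 : Real.sin (5 * Real.pi / 4) = (-(Real.sqrt 2/2)) := by
  rw [show (5 * Real.pi / 4 : ℝ) = Real.pi + Real.pi/4 from by ring]
  simp [Real.cos_add, Real.sin_add, Real.cos_pi, Real.sin_pi, Real.cos_two_pi, Real.sin_two_pi, Real.cos_pi_div_two, Real.sin_pi_div_two, Real.cos_pi_div_four, Real.sin_pi_div_four]
lemma wc5 : Real.cos (2 * (5 * Real.pi / 4)) = 0 := by
  rw [show (2 * (5 * Real.pi / 4) : ℝ) = 2*Real.pi + Real.pi/2 from by ring]
  simp [Real.cos_add, Real.sin_add, Real.cos_pi, Real.sin_pi, Real.cos_two_pi, Real.sin_two_pi, Real.cos_pi_div_two, Real.sin_pi_div_two, Real.cos_pi_div_four, Real.sin_pi_div_four]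
lemma ws5 : Real.sin (2 * (5 * Real.pi / 4)) = 1 := by
  rw [show (2 * (5 * Real.pi / 4) : ℝ) = 2*Real.pi + Real.pi/2 from by ring]
  simp [Real.cos_add, Real.sin_add, Real.cos_pi, Real.sin_pi, Real.cos_two_pi, Real.sin_two_pi, Real.cos_pi_div_two, Real.sin_pi_div_two, Real.cos_pi_div_four, Real.sin_pi_div_four]

lemma vc6 : Real.cos (6 * Real.pi / 4) = 0 := by
  rw [show (6 * Real.pi / 4 : ℝ) = Real.pi + Real.pi/2 from by ring]
  simp [Real.cos_add, Real.sin_add, Real.cos_pi, Real.sin_pi, Real.cos_two_pi, Real.sin_two_pi, Real.cos_pi_div_two, Real.sin_pi_div_two, Real.cos_pi_div_four, Real.sin_pi_div_four]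
lemma vs6 : Real.sin (6 * Real.pi / 4) = -1 := by
  rw [show (6 * Real.pi / 4 : ℝ) = Real.pi + Real.pi/2 from by ring]
  simp [Real.cos_add, Real.sin_add, Real.cos_pi, Real.sin_pi, Real.cos_two_pi, Real.sin_two_pi, Real.cos_pi_div_two, Real.sin_pi_div_two, Real.cos_pi_div_four, Real.sin_pi_div_four]
lemma wc6 : Real.cos (2 * (6 * Real.pi / 4)) = -1 := by
  rw [show (2 * (6 * Real.pi / 4) : ℝ) = 2*Real.pi + Real.pi from by ring]
  simp [Real.cos_add, Real.sin_add, Real.cos_pi, Real.sin_pi, Real.cos_two_pi, Real.sin_two_pi, Real.cos_pi_div_two, Real.sin_pi_div_two, Real.cos_pi_div_four, Real.sin_pi_div_four]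
lemma ws6 : Real.sin (2 * (6 * Real.pi / 4)) = 0 := by
  rw [show (2 * (6 * Real.pi / 4) : ℝ) = 2*Real.pi + Real.pi from by ring]
  simp [Real.cos_add, Real.sin_add, Real.cos_pi, Real.sin_pi, Real.cos_two_pi, Real.sin_two_pi, Real.cos_pi_div_two, Real.sin_pi_div_two, Real.cos_pi_div_four, Real.sin_pi_div_four]

lemma vc7 : Real.cos (7 * Real.pi / 4) = (Real.sqrt 2/2) := by
  rw [show (7 * Real.pi / 4 : ℝ) = Real.pi + (Real.pi/2 + Real.pi/4) from by ring]
  simp [Real.cos_add, Real.sin_add, Real.cos_pi, Real.sin_pi, Real.cos_two_pi, Real.sin_two_pi, Real.cos_pi_div_two, Real.sin_pi_div_two, Real.cos_pi_div_four, Real.sin_pi_div_four]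
lemma vs7 : Real.sin (7 * Real.pi / 4) = (-(Real.sqrt 2/2)) := by
  rw [show (7 * Real.pi / 4 : ℝ) = Real.pi + (Real.pi/2 + Real.pi/4) from by ring]
  simp [Real.cos_add, Real.sin_add, Real.cos_pi, Real.sin_pi, Real.cos_two_pi, Real.sin_two_pi, Real.cos_pi_div_two, Real.sin_pi_div_two, Real.cos_pi_div_four, Real.sin_pi_div_four]
lemma wc7 : Real.cos (2 * (7 * Real.pi / 4)) = 0 := by
  rw [show (2 * (7 * Real.pi / 4) : ℝ) = 2*Real.pi + (Real.pi + Real.pi/2) from by ring]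
  simp [Real.cos_add, Real.sin_add, Real.cos_pi, Real.sin_pi, Real.cos_two_pi, Real.sin_two_pi, Real.cos_pi_div_two, Real.sin_pi_div_two, Real.cos_pi_div_four, Real.sin_pi_div_four]
lemma ws7 : Real.sin (2 * (7 * Real.pi / 4)) = -1 := by
  rw [show (2 * (7 * Real.pi / 4) : ℝ) = 2*Real.pi + (Real.pi + Real.pi/2) from by ring]
  simp [Real.cos_add, Real.sin_add, Real.cos_pi, Real.sin_pi, Real.cos_two_pi, Real.sin_two_pi, Real.cos_pi_div_two, Real.sin_pi_div_two, Real.cos_pi_div_four, Real.sin_pi_div_four]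

lemma trap_sum (Λ : Matrix (Fin 2) (Fin 2) ℂ →ₗ[ℂ] Matrix (Fin 2) (Fin 2) ℂ) :
    ∑ i : Fin 8, fid Λ (ketPlus ((i : ℕ) * Real.pi / 4)) = 2 * (T0c Λ).re := by
  have hX : ∑ i : Fin 8, (T0c Λ
      + Complex.exp ((((i:ℕ) * Real.pi / 4 : ℝ)) * Complex.I) * Qc Λ
      + Complex.exp (-((((i:ℕ) * Real.pi / 4 : ℝ)) * Complex.I)) * Pc Λ
      + Complex.exp (((2 * ((i:ℕ) * Real.pi / 4) : ℝ)) * Complex.I) * Sc Λ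
      + Complex.exp (-(((2 * ((i:ℕ) * Real.pi / 4) : ℝ)) * Complex.I)) * Rc Λ)
      = 8 * T0c Λ := by
    rw [Fin.sum_univ_eight]
    simp only [cexp_val, cexp_neg_val,
      show ((0:Fin 8):ℕ) = 0 from rfl, show ((1:Fin 8):ℕ) = 1 from rfl,
      show ((2:Fin 8):ℕ) = 2 from rfl, show ((3:Fin 8):ℕ) = 3 from rfl,
      show ((4:Fin 8):ℕ) = 4 from rfl, show ((5:Fin 8):ℕ) = 5 from rfl,
      show ((6:Fin 8):ℕ) = 6 from rfl, show ((7:Fin 8):ℕ) = 7 from rfl,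
      Nat.cast_ofNat, Nat.cast_zero, Nat.cast_one]
    rw [vc0, vc1, vc2, vc3, vc4, vc5, vc6, vc7, vs0, vs1, vs2, vs3, vs4, vs5, vs6, vs7,
      wc0, wc1, wc2, wc3, wc4, wc5, wc6, wc7, ws0, ws1, ws2, ws3, ws4, ws5, ws6, ws7]
    push_cast
    ring
  calc ∑ i : Fin 8, fid Λ (ketPlus ((i : ℕ) * Real.pi / 4))
      = ∑ i : Fin 8, 4⁻¹ * ((T0c Λ
        + Complex.exp ((((i:ℕ) * Real.pi / 4 : ℝ)) * Complex.I) * Qc Λ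
        + Complex.exp (-((((i:ℕ) * Real.pi / 4 : ℝ)) * Complex.I)) * Pc Λ
        + Complex.exp (((2 * ((i:ℕ) * Real.pi / 4) : ℝ)) * Complex.I) * Sc Λ
        + Complex.exp (-(((2 * ((i:ℕ) * Real.pi / 4) : ℝ)) * Complex.I)) * Rc Λ)).re := by
        simp only [fid_ketPlus]
    _ = 4⁻¹ * (∑ i : Fin 8, (T0c Λ
        + Complex.exp ((((i:ℕ) * Real.pi / 4 : ℝ)) * Complex.I) * Qc Λ
        + Complex.exp (-((((i:ℕ) * Real.pi / 4 : ℝ)) * Complex.I)) * Pc Λ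
        + Complex.exp (((2 * ((i:ℕ) * Real.pi / 4) : ℝ)) * Complex.I) * Sc Λ
        + Complex.exp (-(((2 * ((i:ℕ) * Real.pi / 4) : ℝ)) * Complex.I)) * Rc Λ)).re := by
        rw [← Finset.mul_sum, Complex.re_sum]
    _ = 4⁻¹ * ((8 : ℂ) * T0c Λ).re := by rw [hX]
    _ = 2 * (T0c Λ).re := by
        simp [Complex.mul_re]
        ring

/-- the Haar-average fidelity decomposes as
`F_tel = (1/3) F̄_dummy + (2/3) F̄_trap`, where `F̄_dummy` is the average fidelity
on `{|0⟩, |1⟩}` and `F̄_trap` the average over the eight states `|+_{iπ/4}⟩`. -/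
theorem haar_fidelity_dummy_trap_decomposition
    (μ : Measure (Fin 2 → ℂ)) [IsProbabilityMeasure μ]
    (hsupp : ∀ᵐ ψ ∂μ, ‖ψ 0‖ ^ 2 + ‖ψ 1‖ ^ 2 = 1)
    (hinv : ∀ V : Matrix (Fin 2) (Fin 2) ℂ, V ∈ Matrix.unitaryGroup (Fin 2) ℂ →
      μ.map (fun ψ => V.mulVec ψ) = μ)
    (Λ : Matrix (Fin 2) (Fin 2) ℂ →ₗ[ℂ] Matrix (Fin 2) (Fin 2) ℂ) :
    (∫ ψ, fid Λ ψ ∂μ) =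
      (1 / 3) * ((fid Λ ket0 + fid Λ ket1) / 2) +
        (2 / 3) * ((1 / 8) * ∑ i : Fin 8, fid Λ (ketPlus ((i : ℕ) * Real.pi / 4))) := by
  rw [int_fid μ hsupp hinv Λ, fid_ket0, fid_ket1, trap_sum]
  simp only [show (3⁻¹:ℂ) = ((3⁻¹:ℝ):ℂ) from by norm_num,
    show (6⁻¹:ℂ) = ((6⁻¹:ℝ):ℂ) from by norm_num,
    Complex.add_re, Complex.re_ofReal_mul, T0c]
  ring
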